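/- Let τ > 0 and θ ∈ ℝ, and define u_θ, v_θ : ℝ² → ℝ by u_θ(x,y) = −τxy + (sinh θ/(4τ))(2τx (1 + 4τ²x²)^(1/2) + arcsinh(2τx)) and v_θ(x,y) = (1/cosh θ)(1/(4τ²) + x²)^(1/2) + tanh(θ) y. Then (v_θ)_x² + (v_θ)_y² < 1 everywhere and u_θ and v_θ satisfy the twin relations (u_θ)_x = (v_θ)_y/ω̃ − τy and (u_θ)_y = −(v_θ)_x/ω̃ + τx on ℝ², where ω̃ = (1 − (v_θ)_x² − (v_θ)_y²)^(1/2). -/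

import Mathlib

/-- Partial derivative in the `x` direction. -/
noncomputable def px (f : ℝ × ℝ → ℝ) (p : ℝ × ℝ) : ℝ := fderiv ℝ f p (1, 0)

/-- Partial derivative in the `y` direction. -/
noncomputable def py (f : ℝ × ℝ → ℝ) (p : ℝ × ℝ) : ℝ := fderiv ℝ f p (0, 1)

/-- Lorentzian area element `ω̃ = (1 − v_x² − v_y²)^(1/2)` of the graph of `v`. -/
noncomputable def omegT (v : ℝ × ℝ → ℝ) (p : ℝ × ℝ) : ℝ :=
  Real.sqrt (1 - (px v p) ^ 2 - (py v p) ^ 2)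

/-- The invariant minimal graph
`u_θ(x,y) = −τxy + (sinh θ/(4τ))(2τx (1 + 4τ²x²)^(1/2) + arcsinh(2τx))` in `Nil₃(τ)`. -/
noncomputable def uTheta (τ θ : ℝ) : ℝ × ℝ → ℝ := fun p =>
  -τ * p.1 * p.2 + (Real.sinh θ / (4 * τ)) *
    (2 * τ * p.1 * Real.sqrt (1 + 4 * τ ^ 2 * p.1 ^ 2) + Real.arsinh (2 * τ * p.1))

/-- The hyperbolically rotated cylinder
`v_θ(x,y) = (1/cosh θ)(1/(4τ²) + x²)^(1/2) + tanh(θ) y` in `𝕃³`. -/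
noncomputable def vTheta (τ θ : ℝ) : ℝ × ℝ → ℝ := fun p =>
  (1 / Real.cosh θ) * Real.sqrt (1 / (4 * τ ^ 2) + p.1 ^ 2) + Real.tanh θ * p.2

lemma aux_sq_fderiv (c : ℝ) (p : ℝ × ℝ) :
    HasFDerivAt (fun q : ℝ × ℝ => c + q.1 ^ 2)
      (p.1 • ContinuousLinearMap.fst ℝ ℝ ℝ + p.1 • ContinuousLinearMap.fst ℝ ℝ ℝ) p := by
  have := ((hasFDerivAt_fst (𝕜 := ℝ) (p := p)).mul (hasFDerivAt_fst (𝕜 := ℝ))).const_add c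
  simpa [pow_two] using this

lemma aux_px_vTheta (τ θ : ℝ) (hτ : 0 < τ) (p : ℝ × ℝ) :
    px (vTheta τ θ) p =
      p.1 / (Real.cosh θ * Real.sqrt (1 / (4 * τ ^ 2) + p.1 ^ 2)) ∧
    py (vTheta τ θ) p = Real.tanh θ := by
  have hc : (0:ℝ) < 1 / (4 * τ ^ 2) + p.1 ^ 2 := by positivity
  have hd : HasFDerivAt (vTheta τ θ)
      ((1 / Real.cosh θ) • ((1 / (2 * Real.sqrt (1 / (4 * τ ^ 2) + p.1 ^ 2))) •
        (p.1 • ContinuousLinearMap.fst ℝ ℝ ℝ + p.1 • ContinuousLinearMap.fst ℝ ℝ ℝ)) +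
       (Real.tanh θ) • ContinuousLinearMap.snd ℝ ℝ ℝ) p :=
    (((aux_sq_fderiv _ p).sqrt hc.ne').const_mul _).add
      ((hasFDerivAt_snd (𝕜 := ℝ)).const_mul _)
  have hS : (0:ℝ) < Real.sqrt (1 / (4 * τ ^ 2) + p.1 ^ 2) := Real.sqrt_pos.2 hc
  have hch : (0:ℝ) < Real.cosh θ := Real.cosh_pos θ
  constructor
  · rw [px, hd.fderiv]
    simp only [ContinuousLinearMap.add_apply, ContinuousLinearMap.smul_apply,
      ContinuousLinearMap.coe_fst', ContinuousLinearMap.coe_snd', smul_eq_mul]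
    field_simp
    ring
  · rw [py, hd.fderiv]
    simp

lemma aux_px_uTheta (τ θ : ℝ) (hτ : 0 < τ) (p : ℝ × ℝ) :
    px (uTheta τ θ) p =
      -τ * p.2 + Real.sinh θ * Real.sqrt (1 + 4 * τ ^ 2 * p.1 ^ 2) ∧
    py (uTheta τ θ) p = -τ * p.1 := by
  have hc : (0:ℝ) < 1 + 4 * τ ^ 2 * p.1 ^ 2 := by positivity
  have hR : (0:ℝ) < Real.sqrt (1 + 4 * τ ^ 2 * p.1 ^ 2) := Real.sqrt_pos.2 hc
  have hR2 : Real.sqrt (1 + 4 * τ ^ 2 * p.1 ^ 2) ^ 2 = 1 + 4 * τ ^ 2 * p.1 ^ 2 :=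
    Real.sq_sqrt hc.le
  -- inner polynomial 1 + 4τ²x²
  have hq : HasFDerivAt (fun q : ℝ × ℝ => 1 + 4 * τ ^ 2 * q.1 ^ 2)
      ((4 * τ ^ 2) • (p.1 • ContinuousLinearMap.fst ℝ ℝ ℝ +
        p.1 • ContinuousLinearMap.fst ℝ ℝ ℝ)) p := by
    have := ((hasFDerivAt_fst (𝕜 := ℝ) (p := p)).mul
      (hasFDerivAt_fst (𝕜 := ℝ))).const_mul (4 * τ ^ 2)
    have h2 := this.const_add 1
    simpa [pow_two] using h2
  have hsq := hq.sqrt hc.ne'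
  have hlin : HasFDerivAt (fun q : ℝ × ℝ => 2 * τ * q.1)
      ((2 * τ) • ContinuousLinearMap.fst ℝ ℝ ℝ) p :=
    (hasFDerivAt_fst (𝕜 := ℝ)).const_mul _
  have hmul := hlin.mul hsq
  have hars : HasFDerivAt (fun q : ℝ × ℝ => Real.arsinh (2 * τ * q.1))
      ((Real.sqrt (1 + (2 * τ * p.1) ^ 2))⁻¹ • ((2 * τ) • ContinuousLinearMap.fst ℝ ℝ ℝ)) p :=
    hlin.arsinh
  have hxy : HasFDerivAt (fun q : ℝ × ℝ => -τ * q.1 * q.2)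
      ((-τ * p.1) • ContinuousLinearMap.snd ℝ ℝ ℝ +
        p.2 • ((-τ) • ContinuousLinearMap.fst ℝ ℝ ℝ)) p :=
    ((hasFDerivAt_fst (𝕜 := ℝ)).const_mul (-τ)).mul (hasFDerivAt_snd (𝕜 := ℝ))
  have hd := hxy.add (((hmul.add hars)).const_mul (Real.sinh θ / (4 * τ)))
  have harg : 1 + (2 * τ * p.1) ^ 2 = 1 + 4 * τ ^ 2 * p.1 ^ 2 := by ring
  rw [harg] at hars hd
  have hdu : HasFDerivAt (uTheta τ θ) _ p := hd
  constructor
  · rw [px, hdu.fderiv]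
    simp only [ContinuousLinearMap.add_apply, ContinuousLinearMap.smul_apply,
      ContinuousLinearMap.coe_fst', ContinuousLinearMap.coe_snd', smul_eq_mul]
    field_simp
    have hR2' : Real.sqrt (1 + τ ^ 2 * p.1 ^ 2 * 4) ^ 2 = 1 + 4 * τ ^ 2 * p.1 ^ 2 := by
      rw [show (1 + τ ^ 2 * p.1 ^ 2 * 4 : ℝ) = 1 + 4 * τ ^ 2 * p.1 ^ 2 by ring]; exact hR2
    linear_combination (-2 * Real.sinh θ) * hR2'
  · rw [py, hdu.fderiv]
    simp

/-- for `τ > 0` and `θ ∈ ℝ`, the entire minimal graph `u_θ` in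
`Nil₃(τ)` and the hyperbolically rotated cylinder `v_θ` in `𝕃³` are dual:
`v_θ` is spacelike and `u_θ`, `v_θ` satisfy the twin relations. -/
theorem uTheta_vTheta_dual (τ θ : ℝ) (hτ : 0 < τ) :
    ∀ p : ℝ × ℝ,
      ((px (vTheta τ θ) p) ^ 2 + (py (vTheta τ θ) p) ^ 2 < 1) ∧
      (px (uTheta τ θ) p = py (vTheta τ θ) p / omegT (vTheta τ θ) p - τ * p.2) ∧
      (py (uTheta τ θ) p = -px (vTheta τ θ) p / omegT (vTheta τ θ) p + τ * p.1) := by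
  intro p
  obtain ⟨hvx, hvy⟩ := aux_px_vTheta τ θ hτ p
  obtain ⟨hux, huy⟩ := aux_px_uTheta τ θ hτ p
  have hc : (0:ℝ) < 1 / (4 * τ ^ 2) + p.1 ^ 2 := by positivity
  set S := Real.sqrt (1 / (4 * τ ^ 2) + p.1 ^ 2) with hSdef
  have hS : 0 < S := Real.sqrt_pos.2 hc
  have hS2 : S ^ 2 = 1 / (4 * τ ^ 2) + p.1 ^ 2 := Real.sq_sqrt hc.le
  have hch : 0 < Real.cosh θ := Real.cosh_pos θ
  have hcs : Real.cosh θ ^ 2 - Real.sinh θ ^ 2 = 1 := Real.cosh_sq_sub_sinh_sq θ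
  have htanh : Real.tanh θ = Real.sinh θ / Real.cosh θ := Real.tanh_eq_sinh_div_cosh θ
  have hS2' : 4 * τ ^ 2 * S ^ 2 = 1 + 4 * τ ^ 2 * p.1 ^ 2 := by
    rw [hS2]; field_simp
  have key : 1 - (px (vTheta τ θ) p) ^ 2 - (py (vTheta τ θ) p) ^ 2
      = (1 / (2 * τ * Real.cosh θ * S)) ^ 2 := by
    rw [hvx, hvy, htanh]
    field_simp
    linear_combination (4 * τ ^ 2 * S ^ 2) * hcs + hS2'
  have homega : omegT (vTheta τ θ) p = 1 / (2 * τ * Real.cosh θ * S) := by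
    rw [omegT, key, Real.sqrt_sq (by positivity)]
  have hRS : Real.sqrt (1 + 4 * τ ^ 2 * p.1 ^ 2) = 2 * τ * S := by
    have h1 : (1 + 4 * τ ^ 2 * p.1 ^ 2 : ℝ) = (2 * τ * S) ^ 2 := by
      rw [mul_pow, mul_pow, hS2]
      field_simp
      ring
    rw [h1, Real.sqrt_sq (by positivity)]
  refine ⟨?_, ?_, ?_⟩
  · have hpos : 0 < (1 / (2 * τ * Real.cosh θ * S)) ^ 2 := by positivity
    linarith [key, hpos]
  · rw [hux, hRS, hvy, homega, htanh]
    field_simp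
    ring
  · rw [huy, hvx, homega]
    field_simp
    ring
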